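/- Let t be a positive integer and let G be a 3-bounded hypergraph that is H_t-free, where H_t is the hypergraph with t+3 vertices and exactly one edge, of size 3. Let X and Y be disjoint stable sets of G with |X| = |Y| = t, and let d: V(G) → {1,2} be a function with d(v) = 1 for all v ∈ X and d(v) = 2 for all v ∈ Y. Suppose that (i) every edge e of G with e ∩ (X ∪ Y) ≠ ∅ is not monochromatic under d, and (ii) every edge of G of size at most 2 is not monochromatic under d. Then no edge of G is monochromatic under d, i.e., d is a 2-coloring of G. -/
import Mathlib


open Finset

/-- `(V, E)` is a hypergraph: every edge is a nonempty subset of `V`. -/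
def IsHypergraph {α : Type*} (V : Finset α) (E : Finset (Finset α)) : Prop :=
  ∀ e ∈ E, e ⊆ V ∧ e.Nonempty

/-- An edge `e` is monochromatic under the coloring `c`. -/
def Mono {α : Type*} (e : Finset α) {r : ℕ} (c : α → Fin r) : Prop :=
  ∃ i, ∀ v ∈ e, c v = i

/-- `S` is a stable set of the hypergraph with edge set `E`: no edge is
contained in `S`. -/
def IsStable {α : Type*} (E : Finset (Finset α)) (S : Finset α) : Prop :=
  ∀ e ∈ E, ¬ e ⊆ S

/-- `G` contains an induced copy of `H_t` (the hypergraph with `t+3` vertices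
and exactly one edge, of size 3): a set `X` of `t+3` vertices such that `G[X]`
has exactly one edge and that edge has size 3. -/
def HasInducedHt {α : Type*} (V : Finset α) (E : Finset (Finset α)) (t : ℕ) : Prop :=
  ∃ X ⊆ V, X.card = t + 3 ∧
    ∃ e ∈ E, e ⊆ X ∧ e.card = 3 ∧ ∀ f ∈ E, f ⊆ X → f = e

/-- In a 3-bounded `H_t`-free hypergraph, if `X` and `Y` are disjoint stable
sets of size `t`, colored `1` and `2` respectively by `d`, and no edge meeting
`X ∪ Y` and no edge of size at most 2 is monochromatic under `d`, then `d` is a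
2-coloring of `G`. -/
theorem two_coloring_of_Ht_free {α : Type*} [DecidableEq α] (t : ℕ) (ht : 0 < t)
    (V : Finset α) (E : Finset (Finset α))
    (hH : IsHypergraph V E) (hbdd : ∀ e ∈ E, e.card ≤ 3)
    (hfree : ¬ HasInducedHt V E t)
    (X Y : Finset α) (hXV : X ⊆ V) (hYV : Y ⊆ V) (hXY : Disjoint X Y)
    (hXstable : IsStable E X) (hYstable : IsStable E Y)
    (hXcard : X.card = t) (hYcard : Y.card = t)
    (d : α → Fin 2) (hdX : ∀ u ∈ X, d u = 0) (hdY : ∀ u ∈ Y, d u = 1)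
    (h1 : ∀ e ∈ E, (e ∩ (X ∪ Y)).Nonempty → ¬ Mono e d)
    (h2 : ∀ e ∈ E, e.card ≤ 2 → ¬ Mono e d) :
    ∀ e ∈ E, ¬ Mono e d := by
  intro e he hmono
  obtain ⟨i, hi⟩ := hmono
  have hecard : e.card = 3 := by
    rcases lt_or_ge e.card 3 with h | h
    · exact absurd ⟨i, hi⟩ (h2 e he (by omega))
    · exact le_antisymm (hbdd e he) h
  have hdisj : ∀ v ∈ e, v ∉ X ∪ Y := by
    intro v hv hvXY
    exact h1 e he ⟨v, mem_inter.mpr ⟨hv, hvXY⟩⟩ ⟨i, hi⟩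
  have key : ∀ S : Finset α, S ⊆ V → S.card = t →
      S ⊆ X ∪ Y → (∀ u ∈ S, d u = i) → False := by
    intro S hSV hScard hSXY hSi
    have hdS : Disjoint e S := by
      rw [disjoint_left]
      intro v hv hvS
      exact hdisj v hv (hSXY hvS)
    apply hfree
    refine ⟨e ∪ S, union_subset (hH e he).1 hSV, ?_, e, he, subset_union_left, hecard, ?_⟩
    · rw [card_union_of_disjoint hdS, hecard, hScard]; omega
    · intro f hf hfsub
      have hfmono : ∀ v ∈ f, d v = i := by
        intro v hv
        rcases mem_union.mp (hfsub hv) with h | h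
        · exact hi v h
        · exact hSi v h
      by_cases hfS : ∃ v ∈ f, v ∈ S
      · obtain ⟨v, hv, hvS⟩ := hfS
        exact absurd ⟨i, hfmono⟩ (h1 f hf ⟨v, mem_inter.mpr ⟨hv, hSXY hvS⟩⟩)
      · push_neg at hfS
        have hfe : f ⊆ e := fun v hv => (mem_union.mp (hfsub hv)).resolve_right (hfS v hv)
        by_contra hne
        have hss : f ⊂ e := ssubset_of_subset_of_ne hfe hne
        have := card_lt_card hss
        exact absurd ⟨i, hfmono⟩ (h2 f hf (by omega))
  fin_cases i
  · exact key X hXV hXcard subset_union_left (by simpa using hdX)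
  · exact key Y hYV hYcard subset_union_right (by simpa using hdY)
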